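/- Let $k \geq 1$ and let $f(x) = \prod_{i=0}^{k}\left(\prod_{j=0}^{k}(x-j)^2 - (x-i)\right)$. Let $B$ be the largest integer dividing $f(n)$ for all integers $n$, and $B'$ the smallest divisor of $B$ such that $B/B'$ is squarefree. If $n$ is a positive integer with $n > k$ such that $f(n)/B'$ is squarefree, then for each $0 \leq i \leq k$ the squarefree part of $d + i$ (where $d = \prod_{j=0}^k (n-j)^2 - n$) is at least $(d+i)/B'$. -/

import Mathlib

open Polynomial in
/-- Let `k ≥ 1` and `f(x) = ∏_{i=0}^{k} (∏_{j=0}^{k} (x-j)² - (x-i))`. Let `B` be the largest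
integer dividing `f(n)` for all integers `n`, and `B'` the smallest divisor of `B` with
`B/B'` squarefree. If `n > k` is such that `f(n)/B'` is squarefree, then for each `0 ≤ i ≤ k`
the squarefree part of `d + i` (where `d = ∏_{j=0}^k (n-j)² - n`) is at least `(d+i)/B'`:
if `d + i = m s²` with `m ≥ 0` squarefree, then `d + i ≤ m B'`. -/
theorem statement19 (k : ℕ) (hk : 1 ≤ k) (f : Polynomial ℤ)
    (hf : f = ∏ i ∈ Finset.range (k + 1),
      ((∏ j ∈ Finset.range (k + 1), (X - C (j : ℤ)) ^ 2) - (X - C (i : ℤ))))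
    (B : ℕ) (hB : IsGreatest {b : ℕ | 0 < b ∧ ∀ n : ℤ, (b : ℤ) ∣ f.eval n} B)
    (B' : ℕ) (hB' : IsLeast {b : ℕ | b ∣ B ∧ Squarefree (B / b)} B')
    (n : ℤ) (hn : (k : ℤ) < n) (hsf : Squarefree (f.eval n / B'))
    (d : ℤ) (hd : d = (∏ j ∈ Finset.range (k + 1), (n - (j : ℤ)) ^ 2) - n)
    (i : ℕ) (hi : i ≤ k)
    (m s : ℤ) (hm0 : 0 ≤ m) (hm : Squarefree m) (hms : d + i = m * s ^ 2) :
    d + i ≤ m * B' := by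
  classical
  obtain ⟨⟨hBpos, hBdvd⟩, -⟩ := hB
  obtain ⟨⟨hB'B, hBB'sf⟩, hB'least⟩ := hB'
  have hB'pos : 0 < B' := Nat.pos_of_dvd_of_pos hB'B hBpos
  -- evaluation formula
  have hfeval : ∀ t : ℤ, f.eval t =
      ∏ i' ∈ Finset.range (k + 1),
        ((∏ j ∈ Finset.range (k + 1), (t - (j : ℤ)) ^ 2) - (t - (i' : ℤ))) := by
    intro t
    rw [hf]
    simp [Polynomial.eval_prod]
  have hFn : f.eval n = ∏ i' ∈ Finset.range (k + 1), (d + (i' : ℤ)) := by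
    rw [hfeval n]
    refine Finset.prod_congr rfl fun i' _ => ?_
    rw [hd]; ring
  have hmem : i ∈ Finset.range (k + 1) := Finset.mem_range.mpr (Nat.lt_succ_of_le hi)
  have hsplit : f.eval n
      = (d + i) * ∏ i' ∈ (Finset.range (k + 1)).erase i, (d + (i' : ℤ)) := by
    rw [hFn]
    exact (Finset.mul_prod_erase (Finset.range (k + 1)) (fun i' => d + (i' : ℤ)) hmem).symm
  -- divisibility facts
  have hB'dvdFn : (B' : ℤ) ∣ f.eval n :=
    dvd_trans (Int.natCast_dvd_natCast.mpr hB'B) (hBdvd n)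
  have hqmul : (B' : ℤ) * (f.eval n / B') = f.eval n := Int.mul_ediv_cancel' hB'dvdFn
  have hq0 : f.eval n / (B' : ℤ) ≠ 0 := hsf.ne_zero
  have hFn0 : f.eval n ≠ 0 := by
    rw [← hqmul]
    exact mul_ne_zero (by exact_mod_cast hB'pos.ne') hq0
  -- natAbs versions
  set F : ℕ := (f.eval n).natAbs with hF
  have hF0 : F ≠ 0 := Int.natAbs_ne_zero.mpr hFn0
  set Qn : ℕ := (f.eval n / (B' : ℤ)).natAbs with hQn
  have hQsf : Squarefree Qn := Int.squarefree_natAbs.mpr hsf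
  have hFeq : F = B' * Qn := by
    rw [hF, ← hqmul, Int.natAbs_mul, Int.natAbs_natCast]
  set D : ℕ := (d + i).natAbs with hD
  have hDdvdF : D ∣ F := Int.natAbs_dvd_natAbs.mpr ⟨_, hsplit⟩
  have hD0 : D ≠ 0 := by
    intro h
    exact hF0 (Nat.eq_zero_of_zero_dvd (h ▸ hDdvdF))
  set S : ℕ := s.natAbs with hS
  have hS2D : S ^ 2 ∣ D := by
    rw [hS, hD, ← Int.natAbs_pow]
    exact Int.natAbs_dvd_natAbs.mpr ⟨m, by rw [hms]; ring⟩
  have hS0 : S ≠ 0 := by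
    intro h
    rw [h] at hS2D
    exact hD0 (Nat.eq_zero_of_zero_dvd (by simpa using hS2D))
  -- key claim : S^2 ∣ B'
  have key : S ^ 2 ∣ B' := by
    rw [← Nat.factorization_le_iff_dvd (pow_ne_zero 2 hS0) hB'pos.ne']
    rw [Finsupp.le_def]
    intro p
    by_cases hp : p.Prime
    · have hpow : (S ^ 2).factorization p = 2 * S.factorization p := by
        simp [Nat.factorization_pow]
      rw [hpow]
      set a := S.factorization p with ha
      rcases Nat.eq_zero_or_pos a with ha0 | ha1
      · simp [ha0]
      by_contra hcon
      push_neg at hcon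
      -- p^(2a) divides d+i and F
      have hpaS : p ^ a ∣ S := Nat.ordProj_dvd S p
      have hp2aD : p ^ (2 * a) ∣ D := by
        have h2 : (p ^ a) ^ 2 ∣ S ^ 2 := pow_dvd_pow_of_dvd hpaS 2
        have : p ^ (2 * a) = (p ^ a) ^ 2 := by rw [← pow_mul, Nat.mul_comm]
        rw [this]
        exact h2.trans hS2D
      have hpd2a : ((p : ℤ)) ^ (2 * a) ∣ (d + i) := by
        rw [← Int.natAbs_dvd_natAbs]
        simpa [Int.natAbs_pow] using hp2aD
      have hp2aF : p ^ (2 * a) ∣ F := hp2aD.trans hDdvdF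
      have h2aα : 2 * a ≤ F.factorization p :=
        (Nat.Prime.pow_dvd_iff_le_factorization hp hF0).mp hp2aF
      have hα : F.factorization p ≤ B'.factorization p + 1 := by
        rw [hFeq, Nat.factorization_mul hB'pos.ne' hQsf.ne_zero]
        have := hQsf.natFactorization_le_one p
        simp only [Finsupp.add_apply]
        omega
      have hαeq : F.factorization p = 2 * a := by omega
      have hβ'1 : 1 ≤ B'.factorization p := by omega
      have hpB' : p ∣ B' := Nat.dvd_of_factorization_pos (by omega)
      -- no other factor is divisible by p
      have hP2 : ¬ (p : ℤ) ∣ ∏ i' ∈ (Finset.range (k + 1)).erase i, (d + (i' : ℤ)) := by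
        intro hdvd
        have hbig : (p : ℤ) ^ (2 * a + 1) ∣ f.eval n := by
          rw [hsplit, pow_succ]
          exact mul_dvd_mul hpd2a hdvd
        have hbigN : p ^ (2 * a + 1) ∣ F := by
          rw [hF]
          have := Int.natAbs_dvd_natAbs.mpr hbig
          simpa [Int.natAbs_pow] using this
        have := (Nat.Prime.pow_dvd_iff_le_factorization hp hF0).mp hbigN
        omega
      have hforall : ∀ i' ∈ (Finset.range (k + 1)).erase i, ¬ (p : ℤ) ∣ (d + (i' : ℤ)) :=
        fun i' hi' hdvd => hP2 (hdvd.trans (Finset.dvd_prod_of_mem _ hi'))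
      have hpdi : (p : ℤ) ∣ d + i :=
        (dvd_pow_self (p : ℤ) (by omega : 2 * a ≠ 0)).trans hpd2a
      have hip : i < p := by
        by_contra hle
        push_neg at hle
        have hmem' : i - p ∈ (Finset.range (k + 1)).erase i := by
          refine Finset.mem_erase.mpr ⟨?_, Finset.mem_range.mpr ?_⟩
          · have := hp.pos; omega
          · omega
        refine hforall _ hmem' ?_
        have hcast : ((i - p : ℕ) : ℤ) = (i : ℤ) - p := by
          push_cast [hle]; ring
        rw [hcast]
        have heq : d + ((i : ℤ) - p) = (d + i) - p := by ring
        rw [heq]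
        exact dvd_sub hpdi dvd_rfl
      have hpk : k < i + p := by
        by_contra hle
        push_neg at hle
        have hmem' : i + p ∈ (Finset.range (k + 1)).erase i := by
          refine Finset.mem_erase.mpr ⟨?_, Finset.mem_range.mpr ?_⟩
          · have := hp.pos; omega
          · omega
        refine hforall _ hmem' ?_
        have hcast : ((i + p : ℕ) : ℤ) = (i : ℤ) + p := by push_cast; ring
        rw [hcast]
        have heq : d + ((i : ℤ) + p) = (d + i) + p := by ring
        rw [heq]
        exact dvd_add hpdi dvd_rfl
      -- p^2 divides B
      have hpBB' : p ∣ B / B' := by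
        by_contra hnd
        have hcop : Nat.Coprime p (B / B') := (hp.coprime_iff_not_dvd).mpr hnd
        have hsq : Squarefree (p * (B / B')) :=
          (Nat.squarefree_mul hcop).mpr ⟨hp.prime.squarefree, hBB'sf⟩
        have hbB : B' / p ∣ B := (Nat.div_dvd_of_dvd hpB').trans hB'B
        have hpB'pos : 0 < B' / p := Nat.div_pos (Nat.le_of_dvd hB'pos hpB') hp.pos
        have hquot : B / (B' / p) = p * (B / B') := by
          have h1 : (B' / p) * p = B' := Nat.div_mul_cancel hpB'
          have h2 : B' * (B / B') = B := Nat.mul_div_cancel' hB'B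
          have h3 : B = (B' / p) * (p * (B / B')) := by rw [← mul_assoc, h1, h2]
          exact Nat.div_eq_of_eq_mul_left hpB'pos (h3.trans (mul_comm _ _))
        have hle := hB'least ⟨hbB, by rw [hquot]; exact hsq⟩
        have hlt : B' / p < B' := Nat.div_lt_self hB'pos hp.one_lt
        omega
      have hp2B : p ^ 2 ∣ B := by
        have h2 : B' * (B / B') = B := Nat.mul_div_cancel' hB'B
        rw [pow_two, ← h2]
        exact mul_dvd_mul hpB' hpBB'
      -- evaluate at t = i + p and contradict
      set t : ℤ := (i : ℤ) + p with ht
      set G : ℤ := ∏ j ∈ (Finset.range (k + 1)).erase i, (t - (j : ℤ)) ^ 2 with hG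
      have hti : t - (i : ℤ) = (p : ℤ) := by rw [ht]; ring
      have hPt : (∏ j ∈ Finset.range (k + 1), (t - (j : ℤ)) ^ 2) = (p : ℤ) ^ 2 * G := by
        rw [← Finset.mul_prod_erase _ _ hmem, hti]
      have hfactored : f.eval t = ((p : ℤ) * ((p : ℤ) * G - 1)) *
          ∏ i' ∈ (Finset.range (k + 1)).erase i, ((p : ℤ) ^ 2 * G - (t - (i' : ℤ))) := by
        rw [hfeval t, ← Finset.mul_prod_erase _ _ hmem]
        congr 1
        · rw [hPt, hti]; ring
        · exact Finset.prod_congr rfl fun j hj => by rw [hPt]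
      have hpz : Prime (p : ℤ) := Int.prime_iff_natAbs_prime.mpr (by simpa using hp)
      have hnd1 : ¬ (p : ℤ) ∣ ((p : ℤ) * G - 1) := by
        intro h
        have h1 : (p : ℤ) ∣ 1 := by
          have := dvd_sub (Dvd.intro G rfl) h
          simpa using this
        exact hpz.not_dvd_one h1
      have hnd2 : ¬ (p : ℤ) ∣
          ∏ i' ∈ (Finset.range (k + 1)).erase i, ((p : ℤ) ^ 2 * G - (t - (i' : ℤ))) := by
        intro h
        obtain ⟨i', hi', hdd⟩ := (hpz.dvd_finset_prod_iff _).mp h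
        obtain ⟨hne, hirange⟩ := Finset.mem_erase.mp hi'
        have hrange := Finset.mem_range.mp hirange
        have h1 : (p : ℤ) ∣ (t - (i' : ℤ)) := by
          have hsq : (p : ℤ) ∣ (p : ℤ) ^ 2 * G := ⟨(p : ℤ) * G, by ring⟩
          have := dvd_sub hsq hdd
          simpa using this
        have h2 : (p : ℤ) ∣ ((i : ℤ) - (i' : ℤ)) := by
          have heq : (i : ℤ) - (i' : ℤ) = (t - (i' : ℤ)) - p := by rw [ht]; ring
          rw [heq]
          exact dvd_sub h1 dvd_rfl
        have habs : |(i : ℤ) - (i' : ℤ)| < (p : ℤ) := by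
          rw [abs_lt]
          constructor <;> omega
        have h0 : (i : ℤ) - (i' : ℤ) = 0 := Int.eq_zero_of_abs_lt_dvd h2 habs
        have : i' = i := by omega
        exact hne this
      have hndiv : ¬ ((p : ℤ) ^ 2 ∣ f.eval t) := by
        rw [hfactored]
        intro hdd
        have hdd' : (p : ℤ) * (p : ℤ) ∣ (p : ℤ) * (((p : ℤ) * G - 1) *
            ∏ i' ∈ (Finset.range (k + 1)).erase i, ((p : ℤ) ^ 2 * G - (t - (i' : ℤ)))) := by
          rw [← pow_two]
          convert hdd using 1
          ring
        have hpne : (p : ℤ) ≠ 0 := by exact_mod_cast hp.pos.ne'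
        have hW := (mul_dvd_mul_iff_left hpne).mp hdd'
        rcases hpz.dvd_mul.mp hW with h | h
        · exact hnd1 h
        · exact hnd2 h
      apply hndiv
      have hcast : ((p ^ 2 : ℕ) : ℤ) ∣ (B : ℤ) := Int.natCast_dvd_natCast.mpr hp2B
      have := hcast.trans (hBdvd t)
      simpa using this
    · simp [Nat.factorization_eq_zero_of_not_prime _ hp]
  -- conclude
  have hs2B' : s ^ 2 ∣ (B' : ℤ) := by
    rw [← Int.natAbs_dvd, Int.natAbs_pow]
    exact_mod_cast key
  have hs2le : s ^ 2 ≤ (B' : ℤ) := Int.le_of_dvd (by exact_mod_cast hB'pos) hs2B'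
  calc d + i = m * s ^ 2 := hms
    _ ≤ m * B' := mul_le_mul_of_nonneg_left hs2le hm0
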